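/- With g_i(p) = (1-p)^i - p^i, x = p(1-p), f_i(p) = g_{i-1}(p)/g_i(p), and L_m(p) defined by L_2(p)=1, L_m(p) = f_m(p) + L_{m-1}(p)(f_m(p)-1), one has for all m ≥ 2: f_m(p)·L_m(p) = (1/g_m(p)^2) · Σ_{i=1}^{m-1} x^{m-i-1} g_i(p)^2, provided g_i(p) ≠ 0 for all 2 ≤ i ≤ m and p ≠ 1/2. -/

import Mathlib

/-- g_i(p) = (1-p)^i - p^i. -/
noncomputable def g (p : ℝ) (i : ℕ) : ℝ := (1 - p) ^ i - p ^ i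

/-- f_i(p) = g_{i-1}(p)/g_i(p). -/
noncomputable def f (p : ℝ) (i : ℕ) : ℝ := g p (i - 1) / g p i

/-- L_2 = 1, L_m = f_m + L_{m-1} (f_m - 1). -/
noncomputable def L (p : ℝ) : ℕ → ℝ
  | 0 => 1
  | 1 => 1
  | 2 => 1
  | (n + 3) => f p (n + 3) + L p (n + 2) * (f p (n + 3) - 1)

lemma g_rec (p : ℝ) (i : ℕ) : g p (i + 2) = g p (i + 1) - p * (1 - p) * g p i := by
  simp only [g]; ring

lemma g_one_ne (p : ℝ) (hp : p ≠ 1 / 2) : g p 1 ≠ 0 := by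
  simp only [g, pow_one]
  intro h; apply hp; linarith

/-- f_m(p) L_m(p) = (1/g_m(p)^2) Σ_{i=1}^{m-1} x^{m-i-1} g_i(p)^2 with x = p(1-p). -/
theorem fL_sum_form (p : ℝ) (hp : p ≠ 1 / 2) (m : ℕ) (hm : 2 ≤ m)
    (hg : ∀ i, 2 ≤ i → i ≤ m → g p i ≠ 0) :
    f p m * L p m =
      (1 / (g p m) ^ 2) *
        ∑ i ∈ Finset.Icc 1 (m - 1), (p * (1 - p)) ^ (m - i - 1) * (g p i) ^ 2 := by
  induction m, hm using Nat.le_induction with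
  | base =>
    have h2 : g p 2 ≠ 0 := hg 2 le_rfl le_rfl
    have h1 : g p 1 = g p 2 := by simp only [g]; ring
    simp only [f, L, show (2:ℕ) - 1 = 1 from rfl, Finset.Icc_self, Finset.sum_singleton,
      show (2:ℕ) - 1 - 1 = 0 from rfl, pow_zero, one_mul, mul_one, h1]
    field_simp
  | succ n hn ih =>
    obtain ⟨k, rfl⟩ : ∃ k, n = k + 2 := ⟨n - 2, by omega⟩
    have ih' := ih (fun i h2 hle => hg i h2 (hle.trans (Nat.le_succ _)))
    have hg2 : g p (k + 2) ≠ 0 := hg (k + 2) (by omega) (by omega)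
    have hg3 : g p (k + 3) ≠ 0 := hg (k + 3) (by omega) (by omega)
    have hg1 : g p (k + 1) ≠ 0 := by
      rcases Nat.eq_zero_or_pos k with rfl | hk
      · exact g_one_ne p hp
      · exact hg (k + 1) (by omega) (by omega)
    set x := p * (1 - p) with hx
    set S := ∑ i ∈ Finset.Icc 1 (k + 1), x ^ (k + 2 - i - 1) * (g p i) ^ 2 with hS
    -- rewrite the new sum
    have hsum : ∑ i ∈ Finset.Icc 1 (k + 3 - 1), x ^ (k + 3 - i - 1) * (g p i) ^ 2
        = x * S + (g p (k + 2)) ^ 2 := by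
      have : (k + 3 - 1) = (k + 1) + 1 := by omega
      rw [this, Finset.sum_Icc_succ_top (by omega)]
      have : ∀ i ∈ Finset.Icc 1 (k + 1), x ^ (k + 3 - i - 1) * (g p i) ^ 2
          = x * (x ^ (k + 2 - i - 1) * (g p i) ^ 2) := by
        intro i hi
        rw [Finset.mem_Icc] at hi
        have : k + 3 - i - 1 = (k + 2 - i - 1) + 1 := by omega
        rw [this, pow_succ]
        ring
      rw [Finset.sum_congr rfl this, ← Finset.mul_sum]
      have : k + 3 - (k + 2) - 1 = 0 := by omega
      rw [this, pow_zero, one_mul]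
    rw [hsum]
    -- express ih'
    simp only [f, show (k + 2) - 1 = k + 1 from rfl, show (k + 3) - 1 = k + 2 from rfl] at ih' ⊢
    have key : g p (k + 1) * L p (k + 2) * g p (k + 2) = S := by
      field_simp at ih'
      exact mul_right_cancel₀ hg2 (by linear_combination g p (k + 2) * ih')
    have hT : L p (k + 2) = S / (g p (k + 1) * g p (k + 2)) := by
      rw [eq_div_iff (mul_ne_zero hg1 hg2)]
      linear_combination key
    have hL : L p (k + 3) = g p (k + 2) / g p (k + 3)
        + L p (k + 2) * (g p (k + 2) / g p (k + 3) - 1) := by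
      show f p (k + 3) + L p (k + 2) * (f p (k + 3) - 1) = _
      simp [f]
    rw [hL, hT]
    have grec : g p (k + 3) = g p (k + 2) - x * g p (k + 1) := g_rec p (k + 1)
    rw [grec] at hg3 ⊢
    field_simp
    ring
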